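/- arXiv:2310.01697 — 2 statements merged into one kernel-verified Lean document; each statement's English description precedes it below -/
import Mathlib

section
/- Let (X, d) be a complete separable metric space with finite diameter, (m_x)_{x∈X} a Markov transition probability kernel on X, ω a modulus of continuity, and f : X → ℝ a bounded ω-Hölder function that is flat with respect to some coupling of the kernel: there exist measurable families of probability measures Π^n_{x,y} on X^n × X^n with marginals m^n_x and m^n_y and a constant C > 0 such that for all n, x, y and Π^n_{x,y}-almost every (x̄, ȳ), |f^n(x̄) − f^n(ȳ)| ≤ C ω(d(x,y)). Let Lφ(x) = ∫_X e^{f(y)} φ(y) dm_x(y) and let ϱ = limsup_{n→∞} (L^n 1(x))^{1/n} (which is finite, positive, and independent of x). Then there exist constants 0 < A ≤ B and a bounded ω-Hölder function h : X → ℝ with A ≤ h(x) ≤ B for all x ∈ X and L h = ϱ h. -/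
open MeasureTheory Filter Topology
open scoped ENNReal



noncomputable def pathLaw {X : Type*} [MeasurableSpace X] (m : X → Measure X) :
    (n : ℕ) → X → Measure (Fin n → X)
  | 0, _ => Measure.dirac (fun i => i.elim0)
  | n + 1, x => (m x).bind fun y => (pathLaw m n y).map (Fin.cons y)

section Helpers

variable {X : Type*} [MeasurableSpace X]

lemma measurable_finCons {n : ℕ} :
    Measurable (fun p : X × (Fin n → X) => (Fin.cons p.1 p.2 : Fin (n+1) → X)) := by
  apply measurable_pi_lambda
  intro i
  refine Fin.cases ?_ (fun j => ?_) i
  · simpa using measurable_fst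
  · simp only [Fin.cons_succ]; exact (measurable_pi_apply j).comp measurable_snd

lemma measurable_finCons_fixed {n : ℕ} (y : X) :
    Measurable (fun q : Fin n → X => (Fin.cons y q : Fin (n+1) → X)) :=
  measurable_finCons.comp (measurable_const.prodMk measurable_id)

lemma pathLaw_meas_prob (m : X → Measure X) (hm : Measurable m)
    (hmp : ∀ x, IsProbabilityMeasure (m x)) :
    ∀ n : ℕ, Measurable (pathLaw m n) ∧ ∀ x, IsProbabilityMeasure (pathLaw m n x) := by
  intro n
  induction n with
  | zero =>
      constructor
      · have : pathLaw m 0 = fun _ : X => Measure.dirac (fun i : Fin 0 => i.elim0) := rfl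
        rw [this]; exact measurable_const
      · intro x
        show IsProbabilityMeasure (Measure.dirac (fun i : Fin 0 => i.elim0))
        infer_instance
  | succ n ih =>
      obtain ⟨ihm, ihp⟩ := ih
      set κn : ProbabilityTheory.Kernel X (Fin n → X) := ⟨pathLaw m n, ihm⟩ with hκn
      haveI : ProbabilityTheory.IsMarkovKernel κn := ⟨ihp⟩
      have hk : Measurable (fun y : X => (pathLaw m n y).map (fun q : Fin n → X => (Fin.cons y q : Fin (n+1) → X))) := by
        apply Measure.measurable_of_measurable_coe
        intro s hs
        have heq : (fun y : X => ((pathLaw m n y).map (fun q : Fin n → X => (Fin.cons y q : Fin (n+1) → X))) s)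
            = fun y : X => κn y (Prod.mk y ⁻¹'
              {p : X × (Fin n → X) | Fin.cons p.1 p.2 ∈ s}) := by
          funext y
          rw [Measure.map_apply (measurable_finCons_fixed y) hs]
          rfl
        rw [heq]
        exact ProbabilityTheory.Kernel.measurable_kernel_prodMk_left
          (measurable_finCons hs)
      constructor
      · show Measurable fun x => (m x).bind fun y => (pathLaw m n y).map (fun q : Fin n → X => (Fin.cons y q : Fin (n+1) → X))
        exact (Measure.measurable_bind' hk).comp hm
      · intro x
        constructor
        show ((m x).bind fun y => (pathLaw m n y).map (fun q : Fin n → X => (Fin.cons y q : Fin (n+1) → X))) Set.univ = 1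
        rw [Measure.bind_apply MeasurableSet.univ hk.aemeasurable]
        have : ∀ y : X, ((pathLaw m n y).map (fun q : Fin n → X => (Fin.cons y q : Fin (n+1) → X))) Set.univ = 1 := by
          intro y
          rw [Measure.map_apply (measurable_finCons_fixed y) MeasurableSet.univ]
          simpa using (ihp y).measure_univ
        simp only [this, lintegral_one]
        exact (hmp x).measure_univ

lemma pathLaw_cons_measurable (m : X → Measure X) (hm : Measurable m)
    (hmp : ∀ x, IsProbabilityMeasure (m x)) (n : ℕ) :
    Measurable (fun y : X => (pathLaw m n y).map (fun q : Fin n → X => (Fin.cons y q : Fin (n+1) → X))) := by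
  obtain ⟨ihm, ihp⟩ := pathLaw_meas_prob m hm hmp n
  set κn : ProbabilityTheory.Kernel X (Fin n → X) := ⟨pathLaw m n, ihm⟩ with hκn
  haveI : ProbabilityTheory.IsMarkovKernel κn := ⟨ihp⟩
  apply Measure.measurable_of_measurable_coe
  intro s hs
  have heq : (fun y : X => ((pathLaw m n y).map (fun q : Fin n → X => (Fin.cons y q : Fin (n+1) → X))) s)
      = fun y : X => κn y (Prod.mk y ⁻¹'
        {p : X × (Fin n → X) | Fin.cons p.1 p.2 ∈ s}) := by
    funext y
    rw [Measure.map_apply (measurable_finCons_fixed y) hs]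
    rfl
  rw [heq]
  exact ProbabilityTheory.Kernel.measurable_kernel_prodMk_left (measurable_finCons hs)

lemma lintegral_pathLaw_succ (m : X → Measure X) (hm : Measurable m)
    (hmp : ∀ x, IsProbabilityMeasure (m x)) (n : ℕ)
    (G : (Fin (n+1) → X) → ℝ≥0∞) (hG : Measurable G) (x : X) :
    ∫⁻ q, G q ∂ pathLaw m (n+1) x
      = ∫⁻ y, ∫⁻ q, G (Fin.cons y q : Fin (n+1) → X) ∂ pathLaw m n y ∂ m x := by
  have h1 : pathLaw m (n+1) x = (m x).bind fun y => (pathLaw m n y).map (fun q : Fin n → X => (Fin.cons y q : Fin (n+1) → X)) := rfl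
  rw [h1, MeasureTheory.Measure.lintegral_bind (pathLaw_cons_measurable m hm hmp n).aemeasurable hG.aemeasurable]
  congr 1
  funext y
  rw [lintegral_map hG (measurable_finCons_fixed y)]

end Helpers


lemma fekete_aux (g : ℕ → ℝ) (K M : ℝ) (hK : 1 ≤ K) (hM : 0 ≤ M)
    (hpos : ∀ n, 0 < g n)
    (hub : ∀ n : ℕ, g n ≤ Real.exp (M * n)) (hlb : ∀ n : ℕ, Real.exp (-(M * n)) ≤ g n)
    (hsub : ∀ n k, g (n + k) ≤ K * g n * g k)
    (hsup : ∀ n k, g n * g k ≤ K * g (n + k)) :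
    ∃ ℓ : ℝ, Tendsto (fun n : ℕ => Real.log (g n) / n) atTop (𝓝 ℓ) ∧
      ∀ n : ℕ, Real.exp (ℓ * n) / K ≤ g n ∧ g n ≤ K * Real.exp (ℓ * n) := by
  have hK0 : (0:ℝ) < K := lt_of_lt_of_le one_pos hK
  have hlogK : 0 ≤ Real.log K := Real.log_nonneg hK
  have hloggub : ∀ n : ℕ, Real.log (g n) ≤ M * n := fun n => by
    have := Real.log_le_log (hpos n) (hub n)
    simpa [Real.log_exp] using this
  have hlogglb : ∀ n : ℕ, -(M * n) ≤ Real.log (g n) := fun n => by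
    have := Real.log_le_log (Real.exp_pos _) (hlb n)
    simpa [Real.log_exp] using this
  -- bounds at 0
  have hg0ub : g 0 ≤ K := by
    have h := hsup 0 0
    have h0 := hpos 0
    nlinarith
  have hg0lb : 1 / K ≤ g 0 := by
    have h := hsub 0 0
    have h0 := hpos 0
    rw [div_le_iff₀ hK0]
    nlinarith
  -- subadditive sequence u
  set u : ℕ → ℝ := fun n => Real.log K + Real.log (g n) with hu
  have husub : Subadditive u := by
    intro a b
    have h1 : Real.log (g (a + b)) ≤ Real.log K + Real.log (g a) + Real.log (g b) := by
      have := Real.log_le_log (hpos (a + b)) (hsub a b)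
      rwa [Real.log_mul (mul_pos hK0 (hpos a)).ne' (hpos b).ne',
        Real.log_mul hK0.ne' (hpos a).ne'] at this
    simp only [hu]; linarith
  have hubdd : BddBelow (Set.range fun n : ℕ => u n / n) := by
    refine ⟨min 0 (-M), ?_⟩
    rintro _ ⟨n, rfl⟩
    rcases Nat.eq_zero_or_pos n with rfl | hn
    · simp
    · have hn' : (0:ℝ) < n := by exact_mod_cast hn
      have h2 : -(M * n) ≤ u n := by have := hlogglb n; simp only [hu]; linarith
      have : -(M * n) / n ≤ u n / n := by gcongr
      calc min 0 (-M) ≤ -M := min_le_right _ _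
        _ = -(M * n) / n := by field_simp
        _ ≤ u n / n := this
  have hulim := husub.tendsto_lim hubdd
  set ℓ := husub.lim with hℓ
  -- superadditive / v
  set v : ℕ → ℝ := fun n => Real.log K - Real.log (g n) with hv
  have hvsub : Subadditive v := by
    intro a b
    have h1 : Real.log (g a) + Real.log (g b) - Real.log K ≤ Real.log (g (a + b)) := by
      have := Real.log_le_log (mul_pos (hpos a) (hpos b)) (hsup a b)
      rw [Real.log_mul (hpos a).ne' (hpos b).ne',
        Real.log_mul hK0.ne' (hpos (a+b)).ne'] at this
      linarith
    simp only [hv]; linarith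
  have hvbdd : BddBelow (Set.range fun n : ℕ => v n / n) := by
    refine ⟨min 0 (-M), ?_⟩
    rintro _ ⟨n, rfl⟩
    rcases Nat.eq_zero_or_pos n with rfl | hn
    · simp
    · have hn' : (0:ℝ) < n := by exact_mod_cast hn
      have h2 : -(M * n) ≤ v n := by have := hloggub n; simp only [hv]; linarith
      have : -(M * n) / n ≤ v n / n := by gcongr
      calc min 0 (-M) ≤ -M := min_le_right _ _
        _ = -(M * n) / n := by field_simp
        _ ≤ v n / n := this
  have hvlim := hvsub.tendsto_lim hvbdd
  -- log g n / n tends to ℓ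
  have hlogKn : Tendsto (fun n : ℕ => Real.log K / n) atTop (𝓝 0) :=
    tendsto_const_div_atTop_nhds_zero_nat _
  have hgl : Tendsto (fun n : ℕ => Real.log (g n) / n) atTop (𝓝 ℓ) := by
    have : (fun n : ℕ => Real.log (g n) / n)
        = fun n : ℕ => u n / n - Real.log K / n := by
      funext n; simp only [hu]; ring
    rw [this]
    simpa using hulim.sub hlogKn
  -- identify v-limit
  have hgl' : Tendsto (fun n : ℕ => v n / n) atTop (𝓝 (-ℓ)) := by
    have : (fun n : ℕ => v n / n) = fun n : ℕ => Real.log K / n - Real.log (g n) / n := by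
      funext n; simp only [hv]; ring
    rw [this]
    simpa using hlogKn.sub hgl
  have hveq : hvsub.lim = -ℓ := tendsto_nhds_unique hvlim hgl'
  refine ⟨ℓ, hgl, fun n => ?_⟩
  rcases Nat.eq_zero_or_pos n with rfl | hn
  · constructor
    · have : Real.exp (ℓ * (0:ℕ)) = 1 := by norm_num
      rw [this, div_le_iff₀ hK0]
      rw [div_le_iff₀ hK0] at hg0lb; linarith
    · simpa [Real.exp_zero] using (by simpa using hg0ub : g 0 ≤ K * Real.exp (ℓ * (0:ℕ)))
  · have hn' : (0:ℝ) < n := by exact_mod_cast hn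
    constructor
    · have h1 : ℓ ≤ u n / n := husub.lim_le_div hubdd (n := n) (by omega)
      have h2 : ℓ * n ≤ u n := by
        rw [le_div_iff₀ hn'] at h1; linarith
      have h3 : Real.exp (ℓ * n) ≤ K * g n := by
        have := Real.exp_le_exp.mpr h2
        rwa [hu, Real.exp_add, Real.exp_log hK0, Real.exp_log (hpos n)] at this
      rw [div_le_iff₀ hK0]; linarith [h3]
    · have h1 : -ℓ ≤ v n / n := by
        have := hvsub.lim_le_div hvbdd (n := n) (by omega)
        rwa [hveq] at this
      have h2 : -(ℓ * n) ≤ v n := by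
        rw [le_div_iff₀ hn'] at h1; linarith
      have h3 : Real.log (g n) ≤ Real.log K + ℓ * n := by
        simp only [hv] at h2; linarith
      have := Real.exp_le_exp.mpr h3
      rwa [Real.exp_log (hpos n), Real.exp_add, Real.exp_log hK0] at this


/-- Existence of a strictly positive bounded `ω`-Hölder eigenfunction of the
transfer operator of a flat potential, with eigenvalue the spectral radius,
on a space of finite diameter. -/
theorem stmt_18
    {X : Type*} [MetricSpace X] [CompleteSpace X]
    [TopologicalSpace.SeparableSpace X]
    [MeasurableSpace X] [BorelSpace X]
    (hdiam : EMetric.diam (Set.univ : Set X) ≠ ⊤)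
    (m : X → Measure X) (hmp : ∀ x, IsProbabilityMeasure (m x))
    (hmm : ∀ A : Set X, MeasurableSet A → Measurable fun x => m x A)
    (ω : ℝ → ℝ) (hωc : ContinuousOn ω (Set.Ici 0)) (hωm : MonotoneOn ω (Set.Ici 0))
    (hωconc : ConcaveOn ℝ (Set.Ici 0) ω) (hω0 : ω 0 = 0)
    (f : X → ℝ) (hfb : ∃ M, ∀ x, |f x| ≤ M)
    (hfH : ∃ Cf : ℝ, ∀ x y, |f x - f y| ≤ Cf * ω (dist x y))
    (Pl : (n : ℕ) → X → X → Measure ((Fin n → X) × (Fin n → X)))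
    (hPlp : ∀ n x y, IsProbabilityMeasure (Pl n x y))
    (hPlmeas : ∀ n : ℕ, ∀ A : Set ((Fin n → X) × (Fin n → X)), MeasurableSet A →
      Measurable fun q : X × X => Pl n q.1 q.2 A)
    (hmarg1 : ∀ n x y, (Pl n x y).map Prod.fst = pathLaw m n x)
    (hmarg2 : ∀ n x y, (Pl n x y).map Prod.snd = pathLaw m n y)
    (C : ℝ) (hC : 0 < C)
    (hflat : ∀ n x y, ∀ᵐ q ∂ (Pl n x y),
      |(∑ i, f (q.1 i)) - ∑ i, f (q.2 i)| ≤ C * ω (dist x y))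
    (L : (X → ℝ) → (X → ℝ))
    (hL : ∀ φ x, L φ x = ∫ y, Real.exp (f y) * φ y ∂ m x)
    (ϱ : ℝ) (hϱpos : 0 < ϱ)
    (hϱ : ∀ x, Filter.limsup
      (fun n : ℕ => (ENNReal.ofReal (L^[n] (fun _ => 1) x)) ^ ((1 : ℝ) / (n : ℝ)))
      atTop = ENNReal.ofReal ϱ) :
    ∃ A B : ℝ, 0 < A ∧ A ≤ B ∧ ∃ h : X → ℝ,
      (∀ x, A ≤ h x ∧ h x ≤ B) ∧
      (∃ Ch : ℝ, ∀ x y, |h x - h y| ≤ Ch * ω (dist x y)) ∧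
      ∀ x, L h x = ϱ * h x := by
  rcases isEmpty_or_nonempty X with hX | hX
  · exact ⟨1, 1, one_pos, le_refl 1, fun _ => 1,
      fun x => (IsEmpty.false x).elim, ⟨0, fun x => (IsEmpty.false x).elim⟩,
      fun x => (IsEmpty.false x).elim⟩
  -- constants
  obtain ⟨M₀, hfbM⟩ := hfb
  set M : ℝ := max M₀ 0 with hMdef
  have hM : 0 ≤ M := le_max_right _ _
  have hfM : ∀ x, |f x| ≤ M := fun x => le_trans (hfbM x) (le_max_left _ _)
  have hωnn : ∀ t, 0 ≤ t → 0 ≤ ω t := fun t ht => hω0 ▸ hωm (Set.mem_Ici.mpr le_rfl) ht ht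
  have hωsmall : ∀ ε, 0 < ε → ∃ δ, 0 < δ ∧ ∀ t, 0 ≤ t → t < δ → ω t < ε := by
    intro ε hε
    have hc0 : ContinuousWithinAt ω (Set.Ici 0) 0 := hωc 0 (Set.mem_Ici.mpr le_rfl)
    rw [ContinuousWithinAt, hω0] at hc0
    rw [Metric.tendsto_nhdsWithin_nhds] at hc0
    obtain ⟨δ, hδ, hd⟩ := hc0 ε hε
    refine ⟨δ, hδ, fun t ht htδ => ?_⟩
    have := hd (Set.mem_Ici.mpr ht) (by simpa [Real.dist_eq, abs_of_nonneg ht] using htδ)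
    rw [Real.dist_eq, sub_zero] at this
    exact lt_of_le_of_lt (le_abs_self _) this
  obtain ⟨Cf₀, hfH₀⟩ := hfH
  have hfc : Continuous f := by
    rw [Metric.continuous_iff]
    intro x ε hε
    set Cf : ℝ := max Cf₀ 0 with hCf
    have hCf0 : 0 ≤ Cf := le_max_right _ _
    obtain ⟨δ, hδ, hd⟩ := hωsmall (ε / (Cf + 1)) (by positivity)
    refine ⟨δ, hδ, fun y hy => ?_⟩
    rw [Real.dist_eq]
    have h1 : |f y - f x| ≤ Cf₀ * ω (dist y x) := hfH₀ y x
    have h2 : ω (dist y x) < ε / (Cf + 1) := hd _ dist_nonneg hy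
    have h3 : 0 ≤ ω (dist y x) := hωnn _ dist_nonneg
    have h4 : Cf₀ ≤ Cf := le_max_left _ _
    have h5 : (0:ℝ) < Cf + 1 := by positivity
    have h6 : ω (dist y x) * (Cf + 1) < ε := (lt_div_iff₀ h5).mp h2
    nlinarith
  have hfm : Measurable f := hfc.measurable
  have hm : Measurable m := Measure.measurable_of_measurable_coe m hmm
  set κ : ProbabilityTheory.Kernel X X := ⟨m, hm⟩ with hκdef
  haveI : ProbabilityTheory.IsMarkovKernel κ := ⟨hmp⟩
  have hκ : ∀ x, κ x = m x := fun _ => rfl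
  haveI : ∀ x, IsProbabilityMeasure (m x) := hmp
  set g : ℕ → X → ℝ := fun n x => L^[n] (fun _ => 1) x with hgdef
  have hgrec : ∀ n x, g (n+1) x = ∫ y, Real.exp (f y) * g n y ∂ m x := by
    intro n x
    have : g (n+1) x = L (g n) x := by
      simp only [hgdef]
      rw [Function.iterate_succ_apply']
    rw [this, hL]
  have hexpub : ∀ y, Real.exp (f y) ≤ Real.exp M :=
    fun y => Real.exp_le_exp.mpr ((le_abs_self _).trans (hfM y))
  have hexplb : ∀ y, Real.exp (-M) ≤ Real.exp (f y) :=
    fun y => Real.exp_le_exp.mpr (neg_le_of_abs_le (hfM y))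
  have hint : ∀ (φ : X → ℝ) (c : ℝ), Measurable φ → (∀ y, |φ y| ≤ c) →
      ∀ x, Integrable (fun y => Real.exp (f y) * φ y) (m x) := by
    intro φ c hφ hc x
    refine Integrable.mono' (integrable_const (Real.exp M * c)) ?_ ?_
    · exact ((Real.measurable_exp.comp hfm).mul hφ).aestronglyMeasurable
    · refine Eventually.of_forall fun y => ?_
      rw [norm_mul, Real.norm_eq_abs, Real.norm_eq_abs, abs_of_pos (Real.exp_pos _)]
      exact mul_le_mul (hexpub y) (hc y) (abs_nonneg _)
        (Real.exp_pos _).le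
  have hgmb : ∀ n : ℕ, Measurable (g n) ∧
      ∀ x, Real.exp (-(M * n)) ≤ g n x ∧ g n x ≤ Real.exp (M * n) := by
    intro n
    induction n with
    | zero =>
        constructor
        · have : g 0 = fun _ => (1:ℝ) := by funext x; simp [hgdef]
          rw [this]; exact measurable_const
        · intro x; simp [hgdef]
    | succ n ih =>
        obtain ⟨ihm, ihb⟩ := ih
        have habs : ∀ y, |g n y| ≤ Real.exp (M * n) := fun y => by
          rw [abs_of_pos (lt_of_lt_of_le (Real.exp_pos _) (ihb y).1)]; exact (ihb y).2
        have hgpos' : ∀ y, 0 < g n y :=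
          fun y => lt_of_lt_of_le (Real.exp_pos _) (ihb y).1
        have hi := hint (g n) (Real.exp (M*n)) ihm habs
        constructor
        · have heq : g (n+1) = fun x =>
              ∫ y, (fun q : X × X => Real.exp (f q.2) * g n q.2) (x, y) ∂ κ x := by
            funext x; rw [hgrec n x]; rfl
          rw [heq]
          exact (MeasureTheory.StronglyMeasurable.integral_kernel_prod_right'
            (((Real.measurable_exp.comp (hfm.comp measurable_snd)).mul
              (ihm.comp measurable_snd)).stronglyMeasurable)).measurable
        · intro x
          have e1 : Real.exp (-(M * ((n:ℝ)+1))) = Real.exp (-M) * Real.exp (-(M*n)) := by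
            rw [← Real.exp_add]; ring_nf
          have e2 : Real.exp (M * ((n:ℝ)+1)) = Real.exp M * Real.exp (M*n) := by
            rw [← Real.exp_add]; ring_nf
          constructor
          · rw [hgrec n x]
            push_cast
            calc Real.exp (-(M * ((n:ℝ)+1)))
                = ∫ _, Real.exp (-M) * Real.exp (-(M*n)) ∂ m x := by simp [e1]
              _ ≤ ∫ y, Real.exp (f y) * g n y ∂ m x := by
                  refine integral_mono (integrable_const _) (hi x) fun y => ?_
                  exact mul_le_mul (hexplb y) (ihb y).1 (Real.exp_pos _).le
                    (Real.exp_pos _).le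
          · rw [hgrec n x]
            push_cast
            calc ∫ y, Real.exp (f y) * g n y ∂ m x
                ≤ ∫ _, Real.exp M * Real.exp (M*n) ∂ m x := by
                  refine integral_mono (hi x) (integrable_const _) fun y => ?_
                  exact mul_le_mul (hexpub y) (ihb y).2 (hgpos' y).le (Real.exp_pos _).le
              _ = Real.exp (M * ((n:ℝ)+1)) := by simp [e2]
  have hgpos : ∀ n x, 0 < g n x :=
    fun n x => lt_of_lt_of_le (Real.exp_pos _) ((hgmb n).2 x).1
  have hgabs : ∀ n x, |g n x| ≤ Real.exp (M * n) :=
    fun n x => by rw [abs_of_pos (hgpos n x)]; exact ((hgmb n).2 x).2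
  have hGmeas : ∀ k : ℕ,
      Measurable (fun q : Fin k → X => ENNReal.ofReal (Real.exp (∑ i, f (q i)))) := by
    intro k
    apply ENNReal.measurable_ofReal.comp
    apply Real.measurable_exp.comp
    exact Finset.measurable_sum _ (fun i _ => hfm.comp (measurable_pi_apply i))
  -- path-space identity
  have hpath : ∀ n x,
      (∫⁻ q, ENNReal.ofReal (Real.exp (∑ i, f (q i))) ∂ pathLaw m n x)
        = ENNReal.ofReal (g n x) := by
    intro n
    induction n with
    | zero =>
        intro x
        have h0 : pathLaw m 0 x = Measure.dirac (fun i : Fin 0 => i.elim0) := rfl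
        rw [h0]
        have h1 : (fun q : Fin 0 → X => ENNReal.ofReal (Real.exp (∑ i, f (q i))))
            = fun _ => 1 := by
          funext q; simp
        rw [h1, lintegral_const]
        simp [hgdef]
    | succ n ih =>
        intro x
        rw [lintegral_pathLaw_succ m hm hmp n _ (hGmeas (n+1)) x]
        have hinner : ∀ y : X,
            (∫⁻ q, ENNReal.ofReal
                (Real.exp (∑ i, f ((Fin.cons y q : Fin (n+1) → X) i))) ∂ pathLaw m n y)
              = ENNReal.ofReal (Real.exp (f y) * g n y) := by
          intro y
          have hsum : ∀ q : Fin n → X,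
              (∑ i, f ((Fin.cons y q : Fin (n+1) → X) i)) = f y + ∑ i, f (q i) := by
            intro q; rw [Fin.sum_univ_succ]; simp
          calc ∫⁻ q, ENNReal.ofReal
                (Real.exp (∑ i, f ((Fin.cons y q : Fin (n+1) → X) i))) ∂ pathLaw m n y
              = ∫⁻ q, ENNReal.ofReal (Real.exp (f y))
                  * ENNReal.ofReal (Real.exp (∑ i, f (q i))) ∂ pathLaw m n y := by
                congr 1; funext q
                rw [hsum q, Real.exp_add, ENNReal.ofReal_mul (Real.exp_pos _).le]
            _ = ENNReal.ofReal (Real.exp (f y)) * ENNReal.ofReal (g n y) := by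
                rw [lintegral_const_mul _ (hGmeas n), ih y]
            _ = ENNReal.ofReal (Real.exp (f y) * g n y) :=
                (ENNReal.ofReal_mul (Real.exp_pos _).le).symm
        simp only [hinner]
        have hcv := MeasureTheory.ofReal_integral_eq_lintegral_ofReal
          (hint (g n) (Real.exp (M*n)) (hgmb n).1 (hgabs n) x)
          (Eventually.of_forall fun y => mul_nonneg (Real.exp_pos _).le (hgpos n y).le)
        rw [← hcv, hgrec n x]
  -- Harnack inequality
  have hHar : ∀ n x y, g n x ≤ Real.exp (C * ω (dist x y)) * g n y := by
    intro n x y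
    have hr0 : 0 ≤ C * ω (dist x y) := mul_nonneg hC.le (hωnn _ dist_nonneg)
    have e1 : ENNReal.ofReal (g n x)
        = ∫⁻ q, ENNReal.ofReal (Real.exp (∑ i, f (q.1 i))) ∂ Pl n x y := by
      rw [← hpath n x, ← hmarg1 n x y, lintegral_map (hGmeas n) measurable_fst]
    have e2 : ENNReal.ofReal (g n y)
        = ∫⁻ q, ENNReal.ofReal (Real.exp (∑ i, f (q.2 i))) ∂ Pl n x y := by
      rw [← hpath n y, ← hmarg2 n x y, lintegral_map (hGmeas n) measurable_snd]
    have key : ENNReal.ofReal (g n x)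
        ≤ ENNReal.ofReal (Real.exp (C * ω (dist x y))) * ENNReal.ofReal (g n y) := by
      rw [e1, e2]
      calc ∫⁻ q, ENNReal.ofReal (Real.exp (∑ i, f (q.1 i))) ∂ Pl n x y
          ≤ ∫⁻ q, ENNReal.ofReal (Real.exp (C * ω (dist x y)))
              * ENNReal.ofReal (Real.exp (∑ i, f (q.2 i))) ∂ Pl n x y := by
            apply lintegral_mono_ae
            filter_upwards [hflat n x y] with q hq
            have h1 : (∑ i, f (q.1 i)) ≤ C * ω (dist x y) + ∑ i, f (q.2 i) := by
              have := abs_le.mp hq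
              linarith [this.2]
            calc ENNReal.ofReal (Real.exp (∑ i, f (q.1 i)))
                ≤ ENNReal.ofReal (Real.exp (C * ω (dist x y) + ∑ i, f (q.2 i))) :=
                  ENNReal.ofReal_le_ofReal (Real.exp_le_exp.mpr h1)
              _ = ENNReal.ofReal (Real.exp (C * ω (dist x y)))
                  * ENNReal.ofReal (Real.exp (∑ i, f (q.2 i))) := by
                  rw [Real.exp_add, ENNReal.ofReal_mul (Real.exp_pos _).le]
        _ = ENNReal.ofReal (Real.exp (C * ω (dist x y)))
            * ∫⁻ q, ENNReal.ofReal (Real.exp (∑ i, f (q.2 i))) ∂ Pl n x y :=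
            lintegral_const_mul _ ((hGmeas n).comp measurable_snd)
    rw [← ENNReal.ofReal_mul (Real.exp_pos _).le] at key
    exact (ENNReal.ofReal_le_ofReal_iff
      (mul_nonneg (Real.exp_pos _).le (hgpos n y).le)).mp key
  set D : ℝ := Metric.diam (Set.univ : Set X) with hDdef
  have hD0 : 0 ≤ D := Metric.diam_nonneg
  have hdxy : ∀ x y : X, dist x y ≤ D := by
    intro x y
    exact Metric.dist_le_diam_of_mem (Metric.isBounded_iff_ediam_ne_top.mpr hdiam)
      (Set.mem_univ x) (Set.mem_univ y)
  set K : ℝ := Real.exp (C * ω D) with hKdef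
  have hK1 : 1 ≤ K := Real.one_le_exp (mul_nonneg hC.le (hωnn D hD0))
  have hK0 : (0:ℝ) < K := lt_of_lt_of_le one_pos hK1
  have hωd : ∀ x y : X, ω (dist x y) ≤ ω D :=
    fun x y => hωm (Set.mem_Ici.mpr dist_nonneg) (Set.mem_Ici.mpr hD0) (hdxy x y)
  have hHarK : ∀ n x y, g n x ≤ K * g n y := by
    intro n x y
    refine (hHar n x y).trans ?_
    have : Real.exp (C * ω (dist x y)) ≤ K := by
      rw [hKdef]
      exact Real.exp_le_exp.mpr (by nlinarith [hωd x y])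
    nlinarith [hgpos n y]
  -- operator lemmas
  have hLsmul : ∀ (n : ℕ) (φ : X → ℝ) (c : ℝ),
      L^[n] (fun y => c * φ y) = fun x => c * L^[n] φ x := by
    intro n
    induction n with
    | zero => intro φ c; simp
    | succ n ih =>
        intro φ c
        have hstep : L (fun y => c * φ y) = fun x => c * L φ x := by
          funext x
          rw [hL, hL, ← integral_const_mul]
          congr 1; funext y; ring
        rw [Function.iterate_succ_apply, Function.iterate_succ_apply, hstep, ih (L φ) c]
  have hLmono : ∀ (n : ℕ) (φ ψ : X → ℝ) (bψ : ℝ), Measurable φ → Measurable ψ →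
      (∀ y, 0 ≤ φ y) → (∀ y, 0 ≤ ψ y) → (∀ y, ψ y ≤ bψ) → (∀ y, φ y ≤ ψ y) →
      ∀ x, L^[n] φ x ≤ L^[n] ψ x := by
    intro n
    induction n with
    | zero => intro φ ψ bψ _ _ _ _ _ hφψ x; simpa using hφψ x
    | succ n ih =>
        intro φ ψ bψ hφm hψm hφ0 hψ0 hψb hφψ x
        rw [Function.iterate_succ_apply, Function.iterate_succ_apply]
        have hmeasL : ∀ (χ : X → ℝ), Measurable χ → Measurable (L χ) := by
          intro χ hχ
          have : L χ = fun x => ∫ y, (fun q : X × X => Real.exp (f q.2) * χ q.2) (x, y) ∂ κ x := by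
            funext x; rw [hL]; rfl
          rw [this]
          exact (MeasureTheory.StronglyMeasurable.integral_kernel_prod_right'
            (((Real.measurable_exp.comp (hfm.comp measurable_snd)).mul
              (hχ.comp measurable_snd)).stronglyMeasurable)).measurable
        have hφb' : ∀ y, |φ y| ≤ bψ := fun y => by
          rw [abs_of_nonneg (hφ0 y)]; exact (hφψ y).trans (hψb y)
        have hψb' : ∀ y, |ψ y| ≤ bψ := fun y => by
          rw [abs_of_nonneg (hψ0 y)]; exact hψb y
        refine ih (L φ) (L ψ) (Real.exp M * bψ) (hmeasL φ hφm) (hmeasL ψ hψm)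
          ?_ ?_ ?_ ?_ x
        · intro y; rw [hL]
          exact integral_nonneg fun z => mul_nonneg (Real.exp_pos _).le (hφ0 z)
        · intro y; rw [hL]
          exact integral_nonneg fun z => mul_nonneg (Real.exp_pos _).le (hψ0 z)
        · intro y; rw [hL]
          have hb0 : 0 ≤ bψ := le_trans (hψ0 (Classical.arbitrary X)) (hψb _)
          calc ∫ z, Real.exp (f z) * ψ z ∂ m y
              ≤ ∫ _, Real.exp M * bψ ∂ m y := by
                refine integral_mono (hint ψ bψ hψm hψb' y) (integrable_const _) fun z => ?_
                exact mul_le_mul (hexpub z) (hψb z) (hψ0 z) (Real.exp_pos M).le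
            _ = Real.exp M * bψ := by simp
        · intro y; rw [hL, hL]
          exact integral_mono (hint φ bψ hφm hφb' y) (hint ψ bψ hψm hψb' y)
            fun z => mul_le_mul_of_nonneg_left (hφψ z) (Real.exp_pos _).le
  have hsubm : ∀ x (n k : ℕ), g (n + k) x ≤ K * g k x * g n x := by
    intro x n k
    have h1 : g (n + k) x = L^[n] (g k) x := by
      simp only [hgdef]; rw [Function.iterate_add_apply]
    have h3 : L^[n] (fun _ : X => K * g k x) = fun x' => (K * g k x) * g n x' := by
      have h4 := hLsmul n (fun _ : X => (1:ℝ)) (K * g k x)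
      simp only [mul_one] at h4
      exact h4
    have h2 : L^[n] (g k) x ≤ L^[n] (fun _ : X => K * g k x) x := by
      refine hLmono n (g k) _ (K * g k x) (hgmb k).1 measurable_const
        (fun y => (hgpos k y).le) (fun _ => (mul_pos hK0 (hgpos k x)).le)
        (fun _ => le_refl _) (fun y => hHarK k y x) x
    rw [h1]
    calc L^[n] (g k) x ≤ L^[n] (fun _ : X => K * g k x) x := h2
      _ = (K * g k x) * g n x := by rw [h3]
    
  have hsupm : ∀ x (n k : ℕ), g n x * g k x ≤ K * g (n + k) x := by
    intro x n k
    have h1 : g (n + k) x = L^[n] (g k) x := by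
      simp only [hgdef]; rw [Function.iterate_add_apply]
    have h3 : L^[n] (fun _ : X => g k x / K) = fun x' => (g k x / K) * g n x' := by
      have h4 := hLsmul n (fun _ : X => (1:ℝ)) (g k x / K)
      simp only [mul_one] at h4
      exact h4
    have h2 : L^[n] (fun _ : X => g k x / K) x ≤ L^[n] (g k) x := by
      refine hLmono n _ (g k) (Real.exp (M * k)) measurable_const (hgmb k).1
        (fun _ => (div_pos (hgpos k x) hK0).le) (fun y => (hgpos k y).le)
        (fun y => ((hgmb k).2 y).2) (fun y => ?_) x
      rw [div_le_iff₀ hK0]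
      have := hHarK k x y
      nlinarith [hgpos k y]
    rw [h3] at h2
    have h2' : g k x / K * g n x ≤ L^[n] (g k) x := h2
    rw [h1]
    rw [div_mul_eq_mul_div, div_le_iff₀ hK0] at h2'
    nlinarith [h2']
  -- growth bounds via Fekete's lemma
  have hbound : ∀ x (n : ℕ), ϱ^n / K ≤ g n x ∧ g n x ≤ K * ϱ^n := by
    intro x
    obtain ⟨ℓ, hℓt, hℓb⟩ := fekete_aux (fun n => g n x) K M hK1 hM (fun n => hgpos n x)
      (fun n => ((hgmb n).2 x).2) (fun n => ((hgmb n).2 x).1)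
      (fun n k => (hsubm x n k).trans_eq (by ring))
      (fun n k => hsupm x n k)
    have hexpℓ : Real.exp ℓ = ϱ := by
      have t2 : Tendsto (fun n : ℕ => Real.exp (Real.log (g n x) / n)) atTop
          (𝓝 (Real.exp ℓ)) := (Real.continuous_exp.tendsto ℓ).comp hℓt
      have heq : ∀ n : ℕ, (ENNReal.ofReal (g n x)) ^ ((1:ℝ)/(n:ℝ))
          = ENNReal.ofReal (Real.exp (Real.log (g n x) / n)) := by
        intro n
        rw [ENNReal.ofReal_rpow_of_pos (hgpos n x)]
        congr 1
        rw [Real.rpow_def_of_pos (hgpos n x)]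
        congr 1
        ring
      have t3 : Tendsto (fun n : ℕ => (ENNReal.ofReal (g n x)) ^ ((1:ℝ)/(n:ℝ))) atTop
          (𝓝 (ENNReal.ofReal (Real.exp ℓ))) := by
        simp only [heq]
        exact (ENNReal.continuous_ofReal.tendsto _).comp t2
      have t4 := t3.limsup_eq
      have t5 : ENNReal.ofReal ϱ = ENNReal.ofReal (Real.exp ℓ) := by
        rw [← hϱ x]; exact t4
      exact ((ENNReal.ofReal_eq_ofReal_iff hϱpos.le (Real.exp_pos ℓ).le).mp t5).symm
    intro n
    have hne : Real.exp (ℓ * n) = ϱ ^ n := by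
      rw [mul_comm, Real.exp_nat_mul, hexpℓ]
    have := hℓb n
    rw [hne] at this
    exact this
  -- normalized iterates
  set p : ℕ → X → ℝ := fun n x => g n x / ϱ ^ n with hpdef
  have hϱn : ∀ n : ℕ, (0:ℝ) < ϱ ^ n := fun n => pow_pos hϱpos n
  have hpb : ∀ n x, K⁻¹ ≤ p n x ∧ p n x ≤ K := by
    intro n x
    obtain ⟨h1, h2⟩ := hbound x n
    constructor
    · rw [hpdef, le_div_iff₀ (hϱn n), inv_mul_eq_div, div_le_iff₀ hK0]
      rw [div_le_iff₀ hK0] at h1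
      linarith
    · rw [hpdef, div_le_iff₀ (hϱn n)]
      linarith
  set Ch0 : ℝ := C * K * K with hCh0def
  have hCh0 : 0 < Ch0 := by positivity
  have hexpt : ∀ t T : ℝ, 0 ≤ t → Real.exp t ≤ T → Real.exp t - 1 ≤ t * T := by
    intro t T ht hT
    have h1 : Real.exp t * (-t + 1) ≤ Real.exp t * Real.exp (-t) :=
      mul_le_mul_of_nonneg_left (Real.add_one_le_exp (-t)) (Real.exp_pos t).le
    have h2 : Real.exp t * Real.exp (-t) = 1 := by rw [← Real.exp_add]; simp
    have h3 : t * Real.exp t ≤ t * T := mul_le_mul_of_nonneg_left hT ht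
    nlinarith
  have hpH : ∀ n x y, |p n x - p n y| ≤ Ch0 * ω (dist x y) := by
    have key : ∀ (n : ℕ) (a b : X), p n a - p n b ≤ Ch0 * ω (dist a b) := by
      intro n a b
      have hr0 : 0 ≤ C * ω (dist a b) := mul_nonneg hC.le (hωnn _ dist_nonneg)
      have h1 : g n a / ϱ^n ≤ (Real.exp (C * ω (dist a b)) * g n b) / ϱ^n := by
        gcongr
        · exact hHar n a b
      have h2 : p n a ≤ Real.exp (C * ω (dist a b)) * p n b := by
        rw [hpdef]
        calc g n a / ϱ^n ≤ (Real.exp (C * ω (dist a b)) * g n b) / ϱ^n := h1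
          _ = Real.exp (C * ω (dist a b)) * (g n b / ϱ^n) := by ring
      have hrK : Real.exp (C * ω (dist a b)) ≤ K := by
        rw [hKdef]
        exact Real.exp_le_exp.mpr (mul_le_mul_of_nonneg_left (hωd a b) hC.le)
      have h3 : Real.exp (C * ω (dist a b)) - 1 ≤ (C * ω (dist a b)) * K :=
        hexpt _ K hr0 hrK
      have h4 : p n b ≤ K := (hpb n b).2
      have h5 : 0 < p n b := lt_of_lt_of_le (inv_pos.mpr hK0) (hpb n b).1
      have h6 : 0 ≤ ω (dist a b) := hωnn _ dist_nonneg
      have h7 : (Real.exp (C * ω (dist a b)) - 1) * p n b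
          ≤ ((C * ω (dist a b)) * K) * K := by
        calc (Real.exp (C * ω (dist a b)) - 1) * p n b
            ≤ ((C * ω (dist a b)) * K) * p n b := by
              exact mul_le_mul_of_nonneg_right h3 h5.le
          _ ≤ ((C * ω (dist a b)) * K) * K := by
              exact mul_le_mul_of_nonneg_left h4 (by positivity)
      have : p n a - p n b ≤ (Real.exp (C * ω (dist a b)) - 1) * p n b := by nlinarith
      calc p n a - p n b ≤ (Real.exp (C * ω (dist a b)) - 1) * p n b := this
        _ ≤ ((C * ω (dist a b)) * K) * K := h7
        _ = Ch0 * ω (dist a b) := by rw [hCh0def]; ring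
    intro n x y
    rw [abs_sub_le_iff]
    refine ⟨key n x y, ?_⟩
    have := key n y x
    rwa [dist_comm] at this
  have hpmeas : ∀ n, Measurable (p n) := by
    intro n
    exact ((hgmb n).1).div_const _
  -- Cesàro averages
  set A : ℕ → X → ℝ := fun N x => (∑ n ∈ Finset.range (N+1), p n x) / (N+1) with hAdef
  have hNpos : ∀ N : ℕ, (0:ℝ) < (N:ℝ)+1 := fun N => by positivity
  have hAb : ∀ N x, K⁻¹ ≤ A N x ∧ A N x ≤ K := by
    intro N x
    have hcard : ((Finset.range (N+1)).card : ℝ) = (N:ℝ)+1 := by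
      rw [Finset.card_range]; push_cast; ring
    constructor
    · rw [hAdef, le_div_iff₀ (hNpos N)]
      calc K⁻¹ * ((N:ℝ)+1) = ∑ _n ∈ Finset.range (N+1), K⁻¹ := by
            rw [Finset.sum_const, nsmul_eq_mul, Finset.card_range]; push_cast; ring
        _ ≤ ∑ n ∈ Finset.range (N+1), p n x :=
            Finset.sum_le_sum fun n _ => (hpb n x).1
    · rw [hAdef, div_le_iff₀ (hNpos N)]
      calc ∑ n ∈ Finset.range (N+1), p n x
          ≤ ∑ _n ∈ Finset.range (N+1), K :=
            Finset.sum_le_sum fun n _ => (hpb n x).2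
        _ = K * ((N:ℝ)+1) := by
            rw [Finset.sum_const, nsmul_eq_mul, Finset.card_range]; push_cast; ring
  have hAH : ∀ N x y, |A N x - A N y| ≤ Ch0 * ω (dist x y) := by
    intro N x y
    have h1 : A N x - A N y
        = (∑ n ∈ Finset.range (N+1), (p n x - p n y)) / ((N:ℝ)+1) := by
      rw [hAdef, Finset.sum_sub_distrib]
      ring
    rw [h1, abs_div, abs_of_pos (hNpos N), div_le_iff₀ (hNpos N)]
    calc |∑ n ∈ Finset.range (N+1), (p n x - p n y)|
        ≤ ∑ n ∈ Finset.range (N+1), |p n x - p n y| :=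
          Finset.abs_sum_le_sum_abs _ _
      _ ≤ ∑ _n ∈ Finset.range (N+1), Ch0 * ω (dist x y) :=
          Finset.sum_le_sum fun n _ => hpH n x y
      _ = Ch0 * ω (dist x y) * ((N:ℝ)+1) := by
          rw [Finset.sum_const, nsmul_eq_mul, Finset.card_range]; push_cast; ring
  have hAmeas : ∀ N, Measurable (A N) := by
    intro N
    exact (Finset.measurable_sum _ fun n _ => hpmeas n).div_const _
  have hLp : ∀ n x, ∫ y, Real.exp (f y) * p n y ∂ m x = ϱ * p (n+1) x := by
    intro n x
    calc ∫ y, Real.exp (f y) * p n y ∂ m x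
        = ∫ y, (ϱ^n)⁻¹ * (Real.exp (f y) * g n y) ∂ m x := by
          congr 1; funext y; simp only [hpdef]; ring
      _ = (ϱ^n)⁻¹ * ∫ y, Real.exp (f y) * g n y ∂ m x := integral_const_mul _ _
      _ = (ϱ^n)⁻¹ * g (n+1) x := by rw [hgrec]
      _ = ϱ * p (n+1) x := by
          simp only [hpdef]
          rw [pow_succ]
          field_simp
  have hpabs : ∀ n y, |p n y| ≤ K := fun n y => by
    rw [abs_of_pos (lt_of_lt_of_le (inv_pos.mpr hK0) (hpb n y).1)]
    exact (hpb n y).2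
  have hLA : ∀ N x, ∫ y, Real.exp (f y) * A N y ∂ m x
      = ϱ * A N x + ϱ * (p (N+1) x - p 0 x) / (N+1) := by
    intro N x
    have hι : ∀ n : ℕ, Integrable (fun y => Real.exp (f y) * p n y) (m x) :=
      fun n => hint (p n) K (hpmeas n) (hpabs n) x
    have h1 : (fun y => Real.exp (f y) * A N y)
        = fun y => ((N:ℝ)+1)⁻¹ * (∑ n ∈ Finset.range (N+1), Real.exp (f y) * p n y) := by
      funext y
      simp only [hAdef]
      rw [← Finset.mul_sum]
      ring
    rw [h1, integral_const_mul, integral_finset_sum _ (fun n _ => hι n)]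
    have h2 : ∀ n ∈ Finset.range (N+1),
        ∫ y, Real.exp (f y) * p n y ∂ m x = ϱ * p (n+1) x := fun n _ => hLp n x
    rw [Finset.sum_congr rfl h2]
    have hsum : ∑ n ∈ Finset.range (N+1), p (n+1) x
        = (∑ n ∈ Finset.range (N+1), p n x) + p (N+1) x - p 0 x := by
      have h3 := Finset.sum_range_succ' (fun n => p n x) (N+1)
      have h4 := Finset.sum_range_succ (fun n => p n x) (N+1)
      rw [h4] at h3
      linarith
    have h5 : ∑ n ∈ Finset.range (N+1), ϱ * p (n+1) x
        = ϱ * ((∑ n ∈ Finset.range (N+1), p n x) + p (N+1) x - p 0 x) := by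
      rw [← Finset.mul_sum, hsum]
    rw [h5, hAdef]
    field_simp
    ring
  -- extract convergent subsequence
  obtain ⟨u, hu⟩ := TopologicalSpace.exists_dense_seq X
  have hs : IsCompact (Set.pi Set.univ (fun _ : ℕ => Set.Icc (K⁻¹) K)) :=
    isCompact_univ_pi (fun _ => isCompact_Icc)
  have hmem : ∀ N, (fun i => A N (u i)) ∈ Set.pi Set.univ (fun _ : ℕ => Set.Icc (K⁻¹) K) :=
    fun N => by intro i _; exact ⟨(hAb N (u i)).1, (hAb N (u i)).2⟩
  obtain ⟨z, hz, φ, hφ, hzt⟩ := hs.tendsto_subseq hmem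
  set B : ℕ → X → ℝ := fun N x => A (φ N) x with hBdef
  have hBi : ∀ i, Tendsto (fun N => B N (u i)) atTop (𝓝 (z i)) := by
    intro i
    have := tendsto_pi_nhds.mp hzt i
    exact this
  have hBb : ∀ N x, K⁻¹ ≤ B N x ∧ B N x ≤ K := fun N x => hAb (φ N) x
  have hBH : ∀ N x y, |B N x - B N y| ≤ Ch0 * ω (dist x y) := fun N => hAH (φ N)
  have hconv : ∀ x, ∃ c, Tendsto (fun N => B N x) atTop (𝓝 c) := by
    intro x
    have hC1 : ∀ ε : ℝ, 0 < ε → ∃ i, Ch0 * ω (dist x (u i)) < ε := by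
      intro ε hε
      obtain ⟨δ, hδ, hd⟩ := hωsmall (ε / Ch0) (div_pos hε hCh0)
      obtain ⟨i, hi⟩ := hu.exists_dist_lt x hδ
      exact ⟨i, (lt_div_iff₀' hCh0).mp (hd _ dist_nonneg hi)⟩
    have hcs : CauchySeq (fun N => B N x) := by
      rw [Metric.cauchySeq_iff]
      intro ε hε
      obtain ⟨i, hi⟩ := hC1 (ε/3) (by linarith)
      have hci : CauchySeq (fun N => B N (u i)) := (hBi i).cauchySeq
      rw [Metric.cauchySeq_iff] at hci
      obtain ⟨N₀, hN₀⟩ := hci (ε/3) (by linarith)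
      refine ⟨N₀, fun a ha b hb => ?_⟩
      have d1 : dist (B a x) (B a (u i)) ≤ Ch0 * ω (dist x (u i)) := by
        rw [Real.dist_eq]; exact hBH a x (u i)
      have d2 : dist (B b (u i)) (B b x) ≤ Ch0 * ω (dist x (u i)) := by
        rw [Real.dist_eq]
        have := hBH b (u i) x
        rwa [dist_comm] at this
      have d3 := hN₀ a ha b hb
      calc dist (B a x) (B b x)
          ≤ dist (B a x) (B a (u i)) + dist (B a (u i)) (B b (u i))
            + dist (B b (u i)) (B b x) := dist_triangle4 _ _ _ _
        _ < ε := by linarith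
    exact cauchySeq_tendsto_of_complete hcs
  choose h hh using hconv
  refine ⟨K⁻¹, K, inv_pos.mpr hK0, by
      calc K⁻¹ ≤ 1 := inv_le_one_of_one_le₀ hK1
        _ ≤ K := hK1, h, ?_, ⟨Ch0, ?_⟩, ?_⟩
  · intro x
    constructor
    · exact ge_of_tendsto (hh x) (Eventually.of_forall fun N => (hBb N x).1)
    · exact le_of_tendsto (hh x) (Eventually.of_forall fun N => (hBb N x).2)
  · intro x y
    have t1 : Tendsto (fun N => |B N x - B N y|) atTop (𝓝 |h x - h y|) :=
      ((hh x).sub (hh y)).abs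
    exact le_of_tendsto t1 (Eventually.of_forall fun N => hBH N x y)
  · intro x
    have hBmeas : ∀ N, Measurable (B N) := fun N => hAmeas (φ N)
    have t1 : Tendsto (fun N => ∫ y, Real.exp (f y) * B N y ∂ m x) atTop
        (𝓝 (∫ y, Real.exp (f y) * h y ∂ m x)) := by
      refine tendsto_integral_of_dominated_convergence (fun _ => Real.exp M * K)
        (fun N => ((Real.measurable_exp.comp hfm).mul (hBmeas N)).aestronglyMeasurable)
        (integrable_const _) (fun N => Eventually.of_forall fun y => ?_)
        (Eventually.of_forall fun y => (hh y).const_mul _)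
      have hBpos : 0 < B N y := lt_of_lt_of_le (inv_pos.mpr hK0) (hBb N y).1
      rw [norm_mul, Real.norm_eq_abs, Real.norm_eq_abs, abs_of_pos (Real.exp_pos _),
        abs_of_pos hBpos]
      exact mul_le_mul (hexpub y) (hBb N y).2 hBpos.le (Real.exp_pos M).le
    have t2 : ∀ N, ∫ y, Real.exp (f y) * B N y ∂ m x
        = ϱ * B N x + ϱ * (p (φ N + 1) x - p 0 x) / ((φ N : ℝ) + 1) := by
      intro N
      have := hLA (φ N) x
      push_cast at this ⊢
      exact this
    have terr : Tendsto (fun N => ϱ * (p (φ N + 1) x - p 0 x) / ((φ N : ℝ) + 1)) atTop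
        (𝓝 0) := by
      have hz : Tendsto (fun N : ℕ => (ϱ * (2*K)) * (1 / ((N:ℝ)+1))) atTop (𝓝 0) := by
        have hz0 := tendsto_one_div_add_atTop_nhds_zero_nat (𝕜 := ℝ)
        simpa using hz0.const_mul (ϱ * (2*K))
      refine squeeze_zero_norm ?_ hz
      · intro N
        have hb1 : |p (φ N + 1) x - p 0 x| ≤ 2*K := by
          have u1 := hpb (φ N + 1) x
          have u2 := hpb 0 x
          have hKi : 0 < K⁻¹ := inv_pos.mpr hK0
          rw [abs_le]
          constructor <;> linarith [u1.1, u1.2, u2.1, u2.2, hKi, hK0]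
        have hφN : (N:ℝ) + 1 ≤ (φ N : ℝ) + 1 := by
          have h9 : N ≤ φ N := hφ.le_apply
          linarith [(Nat.cast_le (α := ℝ)).mpr h9]
        have hφpos : (0:ℝ) < (φ N : ℝ) + 1 := by positivity
        rw [Real.norm_eq_abs]
        calc |ϱ * (p (φ N + 1) x - p 0 x) / ((φ N : ℝ) + 1)|
            = ϱ * |p (φ N + 1) x - p 0 x| / ((φ N : ℝ) + 1) := by
              rw [abs_div, abs_mul, abs_of_pos hϱpos, abs_of_pos hφpos]
          _ ≤ ϱ * (2*K) / ((φ N : ℝ) + 1) := by gcongr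
          _ ≤ ϱ * (2*K) / ((N:ℝ) + 1) := by
              gcongr
          _ = (ϱ * (2*K)) * (1 / ((N:ℝ)+1)) := by ring
    have t3 : Tendsto (fun N => ϱ * B N x + ϱ * (p (φ N + 1) x - p 0 x) / ((φ N : ℝ) + 1))
        atTop (𝓝 (ϱ * h x + 0)) := ((hh x).const_mul ϱ).add terr
    have t4 : Tendsto (fun N => ∫ y, Real.exp (f y) * B N y ∂ m x) atTop
        (𝓝 (ϱ * h x + 0)) := t3.congr fun N => (t2 N).symm
    have := tendsto_nhds_unique t1 t4
    rw [hL, this, add_zero]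
end

section
/- Let X = [0,∞)^ℕ with metric d(x,y) = Σ_{n=1}^∞ 2^{-n} min(|x_n − y_n|, 1). (i) For each i ∈ ℕ, the map π_i(x) = x_i/(1 + x_i) satisfies: for every ε > 0 and r_0 > e there exists C > 0 (depending on i and ε) such that |π_i(x) − π_i(y)| ≤ C (log(r_0/d(x,y)))^{-ε} for all x ≠ y. (ii) For δ > 0, the Dyson-type potential f(x) = (x_1/(1+x_1)) · Σ_{n=1}^∞ n^{-(2+δ)} x_n/(1+x_n) is well defined and bounded on X, and for every ε with 0 < ε ≤ 1 + δ and every r_0 > e there exists C > 0 such that |f(x) − f(y)| ≤ C (log(r_0/d(x,y)))^{-ε} for all x ≠ y; that is, f ∈ C^{ε log}(X, ℝ). -/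
/-- The metric `d(x,y) = Σ_{n≥1} 2⁻ⁿ min(|x_n − y_n|,1)` on `[0,∞)^ℕ`. -/
noncomputable def seqDistR (x y : ℕ → ℝ) : ℝ :=
  ∑' n : ℕ, (1 / 2 : ℝ) ^ (n + 1) * min |x n - y n| 1

namespace Aux19

lemma mnonneg (x y : ℕ → ℝ) (n : ℕ) : 0 ≤ min |x n - y n| 1 :=
  le_min (abs_nonneg _) one_pos.le

lemma summable_dist (x y : ℕ → ℝ) :
    Summable (fun n : ℕ => (1 / 2 : ℝ) ^ (n + 1) * min |x n - y n| 1) := by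
  refine Summable.of_nonneg_of_le
    (fun n => mul_nonneg (by positivity) (mnonneg x y n)) (fun n => ?_)
    (((summable_geometric_of_lt_one (by norm_num) (by norm_num :
        (1/2:ℝ) < 1))).mul_right (1/2))
  calc (1 / 2 : ℝ) ^ (n + 1) * min |x n - y n| 1
      ≤ (1 / 2 : ℝ) ^ (n + 1) * 1 := by
        exact mul_le_mul_of_nonneg_left (min_le_right _ _) (by positivity)
    _ = (1/2:ℝ)^n * (1/2) := by rw [mul_one, pow_succ]

lemma dist_nonneg' (x y : ℕ → ℝ) : 0 ≤ seqDistR x y :=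
  tsum_nonneg fun n => mul_nonneg (by positivity) (mnonneg x y n)

lemma dist_le_one (x y : ℕ → ℝ) : seqDistR x y ≤ 1 := by
  have h1 : Summable (fun n : ℕ => (1/2:ℝ)^(n+1)) := by
    have := (summable_geometric_of_lt_one (by norm_num) (by norm_num : (1/2:ℝ) < 1)).mul_right (1/2)
    refine this.congr fun n => ?_
    rw [pow_succ]
  have h2 : seqDistR x y ≤ ∑' n : ℕ, (1/2:ℝ)^(n+1) := by
    refine Summable.tsum_le_tsum (fun n => ?_) (summable_dist x y) h1
    nth_rewrite 2 [show ((1:ℝ)/2)^(n+1) = (1/2:ℝ)^(n+1) * 1 by ring]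
    exact mul_le_mul_of_nonneg_left (min_le_right _ _) (by positivity)
  have h3 : ∑' n : ℕ, (1/2:ℝ)^(n+1) = 1 := by
    have : ∑' n : ℕ, (1/2:ℝ)^(n+1) = ∑' n : ℕ, (1/2:ℝ)^n * (1/2) := by
      exact tsum_congr fun n => by rw [pow_succ]
    rw [this, tsum_mul_right, tsum_geometric_of_lt_one (by norm_num) (by norm_num)]
    norm_num
  linarith

lemma dist_pos {x y : ℕ → ℝ} (hxy : x ≠ y) : 0 < seqDistR x y := by
  obtain ⟨n, hn⟩ : ∃ n, x n ≠ y n := by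
    by_contra h; push_neg at h; exact hxy (funext h)
  refine Summable.tsum_pos (summable_dist x y)
    (fun n => mul_nonneg (by positivity) (mnonneg x y n)) n ?_
  have : 0 < |x n - y n| := abs_pos.mpr (sub_ne_zero.mpr hn)
  have : 0 < min |x n - y n| 1 := lt_min this one_pos
  positivity

lemma coord_le (x y : ℕ → ℝ) (n : ℕ) :
    min |x n - y n| 1 ≤ 2 ^ (n + 1) * seqDistR x y := by
  have h := Summable.le_tsum (summable_dist x y) n
    (fun j _ => mul_nonneg (by positivity) (mnonneg x y j))
  have h2 : ((1:ℝ)/2)^(n+1) = ((2:ℝ)^(n+1))⁻¹ := by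
    rw [one_div, inv_pow]
  rw [h2] at h
  exact (inv_mul_le_iff₀ (by positivity)).mp h

lemma pi_nonneg {a : ℝ} (ha : 0 ≤ a) : 0 ≤ a / (1 + a) :=
  div_nonneg ha (by linarith)

lemma pi_le_one {a : ℝ} (ha : 0 ≤ a) : a / (1 + a) ≤ 1 :=
  (div_le_one (by linarith)).mpr (by linarith)

lemma pi_diff {a b : ℝ} (ha : 0 ≤ a) (hb : 0 ≤ b) :
    |a / (1 + a) - b / (1 + b)| ≤ min |a - b| 1 := by
  refine le_min ?_ ?_
  · have h : a/(1+a) - b/(1+b) = (a-b)/((1+a)*(1+b)) := by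
      field_simp; ring
    rw [h, abs_div, abs_of_pos (show (0:ℝ) < (1+a)*(1+b) by positivity)]
    apply div_le_self (abs_nonneg _)
    nlinarith
  · rw [abs_le]
    have h1 := pi_nonneg ha; have h2 := pi_le_one ha
    have h3 := pi_nonneg hb; have h4 := pi_le_one hb
    constructor <;> linarith

lemma exp_decay (ε : ℝ) (hε : 0 < ε) :
    ∃ C > (0:ℝ), ∀ L : ℝ, 1 ≤ L → Real.exp (-(L / 3)) ≤ C * L ^ (-ε) := by
  set k : ℕ := ⌈ε⌉₊ with hk
  have hk1 : 1 ≤ k := Nat.one_le_ceil_iff.mpr hε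
  have hkpos : (0:ℝ) < (3 * k : ℝ) := by positivity
  refine ⟨(3 * k : ℝ) ^ k, by positivity, fun L hL => ?_⟩
  have hL0 : (0:ℝ) < L := by linarith
  have h1 : L ^ ε ≤ (L : ℝ) ^ (k : ℝ) :=
    Real.rpow_le_rpow_of_exponent_le hL (Nat.le_ceil ε)
  have h2 : (L:ℝ) ^ (k:ℝ) = L ^ k := Real.rpow_natCast L k
  have h3 : (L / (3 * k)) ^ k ≤ Real.exp (L / 3) := by
    have hle : L / (3 * k) ≤ Real.exp (L / (3 * k)) := by
      have := Real.add_one_le_exp (L / (3 * k)); linarith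
    calc (L / (3 * k)) ^ k ≤ Real.exp (L / (3 * k)) ^ k :=
          pow_le_pow_left₀ (by positivity) hle k
      _ = Real.exp ((k : ℝ) * (L / (3 * k))) := (Real.exp_nat_mul _ k).symm
      _ = Real.exp (L / 3) := by
          congr 1
          field_simp
  have h4 : L ^ k = (3 * k : ℝ) ^ k * (L / (3 * k)) ^ k := by
    rw [← mul_pow]
    congr 1
    field_simp
  have h5 : L ^ ε ≤ (3 * k : ℝ) ^ k * Real.exp (L / 3) := by
    calc L ^ ε ≤ L ^ k := by rw [← h2]; exact h1
      _ = (3 * k : ℝ) ^ k * (L / (3 * k)) ^ k := h4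
      _ ≤ (3 * k : ℝ) ^ k * Real.exp (L / 3) := by
          exact mul_le_mul_of_nonneg_left h3 (by positivity)
  have hp1 : (0:ℝ) < L ^ ε := Real.rpow_pos_of_pos hL0 ε
  have he : Real.exp (-(L/3)) * Real.exp (L/3) = 1 := by
    rw [← Real.exp_add]; simp
  rw [Real.rpow_neg hL0.le]
  nlinarith [mul_le_mul_of_nonneg_left h5
      (mul_nonneg (Real.exp_pos (-(L/3))).le (inv_pos.mpr hp1).le),
    he, inv_mul_cancel₀ (ne_of_gt hp1), Real.exp_pos (-(L/3)), inv_pos.mpr hp1]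

lemma summable_a (δ : ℝ) (hδ : 0 < δ) :
    Summable (fun n : ℕ => ((n:ℝ)+1) ^ (-((2:ℝ)+δ))) := by
  have h := (Real.summable_nat_rpow (p := -(2+δ))).mpr (by linarith)
  have h2 := (summable_nat_add_iff 1).mpr h
  refine h2.congr fun n => ?_
  push_cast
  ring_nf

lemma tail_bound (δ : ℝ) (hδ : 0 < δ) (N : ℕ) (hN : 1 ≤ N) (g : ℕ → ℝ)
    (hg : Summable g)
    (hle : ∀ n : ℕ, g n ≤ (((n:ℝ) + (N:ℝ)) + 1) ^ (-((2:ℝ)+δ))) :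
    ∑' n, g n ≤ (N:ℝ) ^ (-((1:ℝ)+δ)) := by
  have hN0 : (0:ℝ) < N := by exact_mod_cast hN
  set h : ℕ → ℝ := fun i => ((i:ℝ)+N)⁻¹ with hh
  have key : ∀ n : ℕ, g n ≤ (N:ℝ) ^ (-δ) * (h n - h (n+1)) := by
    intro n
    set m : ℝ := (n:ℝ) + N with hm
    have hm1 : (1:ℝ) ≤ m := by
      have h1 : (1:ℝ) ≤ (N:ℝ) := by exact_mod_cast hN
      have h2 : (0:ℝ) ≤ (n:ℝ) := Nat.cast_nonneg n
      simp only [hm]; linarith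
    have hm0 : (0:ℝ) < m := by linarith
    have e1 : (m+1) ^ (-((2:ℝ)+δ)) = (m+1) ^ (-δ) * (m+1) ^ (-(2:ℝ)) := by
      rw [← Real.rpow_add (by linarith)]
      ring_nf
    have e2 : (m+1) ^ (-(2:ℝ)) = ((m+1)^(2:ℕ))⁻¹ := by
      rw [← Real.rpow_natCast (m+1) 2, ← Real.rpow_neg (by linarith)]
      norm_num
    have i1 : (m+1) ^ (-δ) ≤ (N:ℝ) ^ (-δ) := by
      apply Real.rpow_le_rpow_of_nonpos hN0 _ (by linarith)
      simp only [hm]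
      have : (0:ℝ) ≤ (n:ℝ) := Nat.cast_nonneg n
      linarith
    have i2 : ((m+1)^(2:ℕ))⁻¹ ≤ m⁻¹ - (m+1)⁻¹ := by
      have e3 : m⁻¹ - (m+1)⁻¹ = (m*(m+1))⁻¹ := by
        field_simp
        ring
      rw [e3]
      apply inv_anti₀ (by positivity)
      nlinarith
    have i3 : g n ≤ (N:ℝ) ^ (-δ) * (m⁻¹ - (m+1)⁻¹) := by
      calc g n ≤ (m+1) ^ (-((2:ℝ)+δ)) := hle n
        _ = (m+1) ^ (-δ) * ((m+1)^(2:ℕ))⁻¹ := by rw [e1, e2]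
        _ ≤ (N:ℝ) ^ (-δ) * (m⁻¹ - (m+1)⁻¹) := by
            apply mul_le_mul i1 i2 (by positivity)
            positivity
    have hcast : h n - h (n+1) = m⁻¹ - (m+1)⁻¹ := by
      simp only [hh, hm]
      push_cast
      ring_nf
    rw [hcast]; exact i3
  apply Summable.tsum_le_of_sum_range_le hg
  intro M
  calc ∑ n ∈ Finset.range M, g n
      ≤ ∑ n ∈ Finset.range M, (N:ℝ) ^ (-δ) * (h n - h (n+1)) :=
        Finset.sum_le_sum fun n _ => key n
    _ = (N:ℝ) ^ (-δ) * (h 0 - h M) := by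
        rw [← Finset.mul_sum, Finset.sum_range_sub']
    _ ≤ (N:ℝ) ^ (-δ) * h 0 := by
        have h0 : (0:ℝ) ≤ h M := by simp only [hh]; positivity
        have := Real.rpow_pos_of_pos hN0 (-δ)
        nlinarith
    _ = (N:ℝ) ^ (-((1:ℝ)+δ)) := by
        simp only [hh]
        rw [show -((1:ℝ)+δ) = -δ + (-1) by ring, Real.rpow_add hN0,
          Real.rpow_neg_one]
        norm_num

lemma sum_pow_le (N : ℕ) : ∑ n ∈ Finset.range N, (2:ℝ)^(n+1) ≤ 2^(N+1) := by
  induction N with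
  | zero => norm_num
  | succ N ih =>
    rw [Finset.sum_range_succ]
    have h : (2:ℝ)^(N+1+1) = 2 * 2^(N+1) := by ring
    rw [h]
    linarith

end Aux19

open Aux19 in
set_option maxHeartbeats 1600000 in
/-- The coordinate maps `x ↦ x_i/(1+x_i)` and the adapted Dyson-type potential
on `[0,∞)^ℕ` belong to the generalized Hölder spaces `C^{ε log}`. -/
theorem stmt_19
    (δ : ℝ) (hδ : 0 < δ)
    (f : (ℕ → ℝ) → ℝ)
    (hf : ∀ x : ℕ → ℝ, f x = (x 0 / (1 + x 0)) *
      ∑' n : ℕ, ((n : ℝ) + 1) ^ (-((2 : ℝ) + δ)) * (x n / (1 + x n))) :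
    (∀ i : ℕ, ∀ ε : ℝ, 0 < ε → ∀ r0 : ℝ, Real.exp 1 < r0 →
      ∃ C > (0 : ℝ), ∀ x y : ℕ → ℝ, (∀ n, 0 ≤ x n) → (∀ n, 0 ≤ y n) → x ≠ y →
        |x i / (1 + x i) - y i / (1 + y i)|
          ≤ C * (Real.log (r0 / seqDistR x y)) ^ (-ε)) ∧
    (∀ x : ℕ → ℝ, (∀ n, 0 ≤ x n) →
      Summable fun n : ℕ => ((n : ℝ) + 1) ^ (-((2 : ℝ) + δ)) * (x n / (1 + x n))) ∧
    (∃ M : ℝ, ∀ x : ℕ → ℝ, (∀ n, 0 ≤ x n) → |f x| ≤ M) ∧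
    (∀ ε : ℝ, 0 < ε → ε ≤ 1 + δ → ∀ r0 : ℝ, Real.exp 1 < r0 →
      ∃ C > (0 : ℝ), ∀ x y : ℕ → ℝ, (∀ n, 0 ≤ x n) → (∀ n, 0 ≤ y n) → x ≠ y →
        |f x - f y| ≤ C * (Real.log (r0 / seqDistR x y)) ^ (-ε)) := by
  set a : ℕ → ℝ := fun n => ((n : ℝ) + 1) ^ (-((2 : ℝ) + δ)) with ha
  have ha0 : ∀ n, 0 < a n := fun n => Real.rpow_pos_of_pos (by positivity) _
  have ha1 : ∀ n, a n ≤ 1 := fun n =>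
    Real.rpow_le_one_of_one_le_of_nonpos (by simp [Nat.cast_nonneg]) (by linarith)
  have hsa : Summable a := summable_a δ hδ
  set A : ℝ := ∑' n, a n with hA
  have hA0 : 0 ≤ A := tsum_nonneg fun n => (ha0 n).le
  -- summability of the series defining f
  have hsum : ∀ z : ℕ → ℝ, (∀ n, 0 ≤ z n) →
      Summable (fun n : ℕ => a n * (z n / (1 + z n))) := by
    intro z hz
    refine Summable.of_nonneg_of_le
      (fun n => mul_nonneg (ha0 n).le (pi_nonneg (hz n))) (fun n => ?_) hsa
    calc a n * (z n / (1 + z n)) ≤ a n * 1 :=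
          mul_le_mul_of_nonneg_left (pi_le_one (hz n)) (ha0 n).le
      _ = a n := mul_one _
  have hSb : ∀ z : ℕ → ℝ, (∀ n, 0 ≤ z n) →
      0 ≤ (∑' n, a n * (z n / (1 + z n))) ∧ (∑' n, a n * (z n / (1 + z n))) ≤ A := by
    intro z hz
    constructor
    · exact tsum_nonneg fun n => mul_nonneg (ha0 n).le (pi_nonneg (hz n))
    · refine Summable.tsum_le_tsum (fun n => ?_) (hsum z hz) hsa
      calc a n * (z n / (1 + z n)) ≤ a n * 1 :=
            mul_le_mul_of_nonneg_left (pi_le_one (hz n)) (ha0 n).le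
        _ = a n := mul_one _
  refine ⟨?_, hsum, ⟨A, ?_⟩, ?_⟩
  · -- Part (i)
    intro i ε hε r0 hr0
    obtain ⟨Ce, hCe, hdec⟩ := exp_decay ε hε
    have hr0pos : (0:ℝ) < r0 := lt_trans (Real.exp_pos 1) hr0
    refine ⟨2 ^ (i+1) * r0 * Ce, by positivity, fun x y hx hy hxy => ?_⟩
    set t : ℝ := seqDistR x y with htdef
    have ht0 : 0 < t := dist_pos hxy
    have ht1 : t ≤ 1 := dist_le_one x y
    set L : ℝ := Real.log (r0 / t) with hLdef
    have hL1 : 1 ≤ L := by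
      have h1 : r0 ≤ r0 / t := by
        rw [le_div_iff₀ ht0]; nlinarith
      have h2 : (1:ℝ) < Real.log r0 := by
        rw [← Real.log_exp 1]
        exact Real.log_lt_log (Real.exp_pos 1) hr0
      have h3 := Real.log_le_log hr0pos h1
      linarith
    have hexpL : Real.exp L = r0 / t := Real.exp_log (by positivity)
    have ht : t = r0 * Real.exp (-L) := by
      rw [Real.exp_neg, hexpL]
      field_simp
    have hLpos : 0 < L := by linarith
    calc |x i / (1 + x i) - y i / (1 + y i)|
        ≤ min |x i - y i| 1 := pi_diff (hx i) (hy i)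
      _ ≤ 2 ^ (i+1) * t := coord_le x y i
      _ = 2 ^ (i+1) * r0 * Real.exp (-L) := by rw [ht]; ring
      _ ≤ 2 ^ (i+1) * r0 * Real.exp (-(L/3)) := by
          apply mul_le_mul_of_nonneg_left (Real.exp_le_exp.mpr (by linarith))
          positivity
      _ ≤ 2 ^ (i+1) * r0 * (Ce * L ^ (-ε)) := by
          apply mul_le_mul_of_nonneg_left (hdec L hL1)
          positivity
      _ = 2 ^ (i+1) * r0 * Ce * L ^ (-ε) := by ring
  · -- boundedness
    intro x hx
    rw [hf x]
    rw [abs_mul]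
    have h1 : |x 0 / (1 + x 0)| ≤ 1 := by
      rw [abs_of_nonneg (pi_nonneg (hx 0))]; exact pi_le_one (hx 0)
    have h2 := hSb x hx
    have h3 : |∑' n, a n * (x n / (1 + x n))| ≤ A := by
      rw [abs_of_nonneg h2.1]; exact h2.2
    calc |x 0 / (1 + x 0)| * |∑' n, a n * (x n / (1 + x n))|
        ≤ 1 * A := mul_le_mul h1 h3 (abs_nonneg _) zero_le_one
      _ = A := one_mul A
  · -- Part (ii) Hölder estimate
    intro ε hε hεδ r0 hr0
    obtain ⟨Ce, hCe, hdec⟩ := exp_decay ε hε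
    have hr0pos : (0:ℝ) < r0 := lt_trans (Real.exp_pos 1) hr0
    have hC1 : (0:ℝ) < (2*A + Real.exp 2) * r0 * Ce := by
      have := Real.exp_pos 2
      apply mul_pos (mul_pos (by linarith) hr0pos) hCe
    have hC2 : (0:ℝ) < (2:ℝ) ^ ((1:ℝ)+δ) := Real.rpow_pos_of_pos two_pos _
    refine ⟨(2*A + Real.exp 2) * r0 * Ce + (2:ℝ) ^ ((1:ℝ)+δ), by linarith,
      fun x y hx hy hxy => ?_⟩
    set t : ℝ := seqDistR x y with htdef
    have ht0 : 0 < t := dist_pos hxy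
    have ht1 : t ≤ 1 := dist_le_one x y
    set L : ℝ := Real.log (r0 / t) with hLdef
    have hL1 : 1 ≤ L := by
      have h1 : r0 ≤ r0 / t := by
        rw [le_div_iff₀ ht0]; nlinarith
      have h2 : (1:ℝ) < Real.log r0 := by
        rw [← Real.log_exp 1]
        exact Real.log_lt_log (Real.exp_pos 1) hr0
      have h3 := Real.log_le_log hr0pos h1
      linarith
    have hexpL : Real.exp L = r0 / t := Real.exp_log (by positivity)
    have ht : t = r0 * Real.exp (-L) := by
      rw [Real.exp_neg, hexpL]
      field_simp
    have hLpos : 0 < L := by linarith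
    have hLe : 0 ≤ L ^ (-ε) := (Real.rpow_pos_of_pos hLpos _).le
    -- choose N
    set N : ℕ := ⌈L/2⌉₊ with hNdef
    have hN1 : 1 ≤ N := Nat.one_le_ceil_iff.mpr (by linarith)
    have hNge : L/2 ≤ (N:ℝ) := Nat.le_ceil _
    have hNlt : (N:ℝ) < L/2 + 1 := Nat.ceil_lt_add_one (by linarith)
    clear_value N
    -- notation
    set m : ℕ → ℝ := fun n => min |x n - y n| 1 with hmdef
    set Sx : ℝ := ∑' n, a n * (x n / (1 + x n)) with hSx
    set Sy : ℝ := ∑' n, a n * (y n / (1 + y n)) with hSy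
    have hsx := hsum x hx
    have hsy := hsum y hy
    have hm0 : ∀ n, 0 ≤ m n := mnonneg x y
    have hm1 : ∀ n, m n ≤ 1 := fun n => min_le_right _ _
    have ham : Summable (fun n => a n * m n) := by
      refine Summable.of_nonneg_of_le
        (fun n => mul_nonneg (ha0 n).le (hm0 n)) (fun n => ?_) hsa
      calc a n * m n ≤ a n * 1 := mul_le_mul_of_nonneg_left (hm1 n) (ha0 n).le
        _ = a n := mul_one _
    -- |Sx - Sy| ≤ ∑' a n * m n
    have habs : ∀ n, |a n * (x n / (1 + x n)) - a n * (y n / (1 + y n))|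
        ≤ a n * m n := by
      intro n
      rw [← mul_sub, abs_mul, abs_of_pos (ha0 n)]
      exact mul_le_mul_of_nonneg_left (pi_diff (hx n) (hy n)) (ha0 n).le
    have hsabs : Summable (fun n =>
        |a n * (x n / (1 + x n)) - a n * (y n / (1 + y n))|) := by
      refine Summable.of_nonneg_of_le (fun n => abs_nonneg _)
        (fun n => (habs n).trans ?_) hsa
      calc a n * m n ≤ a n * 1 := mul_le_mul_of_nonneg_left (hm1 n) (ha0 n).le
        _ = a n := mul_one _
    have hSd : |Sx - Sy| ≤ ∑' n, a n * m n := by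
      have hsub : Sx - Sy
          = ∑' n, (a n * (x n / (1 + x n)) - a n * (y n / (1 + y n))) :=
        (Summable.tsum_sub hsx hsy).symm
      rw [hsub]
      calc |∑' n, (a n * (x n / (1 + x n)) - a n * (y n / (1 + y n)))|
          ≤ ∑' n, |a n * (x n / (1 + x n)) - a n * (y n / (1 + y n))| := by
            simpa using norm_tsum_le_tsum_norm (f := fun n =>
              a n * (x n / (1 + x n)) - a n * (y n / (1 + y n))) (by simpa using hsabs)
        _ ≤ ∑' n, a n * m n := Summable.tsum_le_tsum habs hsabs ham
    -- split the sum
    have hsplit : ∑' n, a n * m n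
        = ∑ n ∈ Finset.range N, a n * m n + ∑' n, a (n + N) * m (n + N) :=
      (Summable.sum_add_tsum_nat_add N ham).symm
    have hhead : ∑ n ∈ Finset.range N, a n * m n ≤ 2 ^ (N+1) * t := by
      calc ∑ n ∈ Finset.range N, a n * m n
          ≤ ∑ n ∈ Finset.range N, (2:ℝ) ^ (n+1) * t := by
            refine Finset.sum_le_sum fun n _ => ?_
            calc a n * m n ≤ 1 * m n :=
                  mul_le_mul_of_nonneg_right (ha1 n) (hm0 n)
              _ = m n := one_mul _
              _ ≤ 2 ^ (n+1) * t := coord_le x y n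
        _ = (∑ n ∈ Finset.range N, (2:ℝ) ^ (n+1)) * t := by
            rw [Finset.sum_mul]
        _ ≤ 2 ^ (N+1) * t :=
            mul_le_mul_of_nonneg_right (sum_pow_le N) ht0.le
    have htail : ∑' n, a (n + N) * m (n + N) ≤ (N:ℝ) ^ (-((1:ℝ)+δ)) := by
      refine tail_bound δ hδ N hN1 _ ((summable_nat_add_iff N).mpr ham) fun n => ?_
      calc a (n + N) * m (n + N) ≤ a (n + N) * 1 :=
            mul_le_mul_of_nonneg_left (hm1 _) (ha0 _).le
        _ = a (n + N) := mul_one _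
        _ = (((n:ℝ) + (N:ℝ)) + 1) ^ (-((2:ℝ)+δ)) := by
            simp only [ha]
            push_cast
            ring_nf
    -- combine: main difference bound
    have hmain : |f x - f y| ≤ 2*A*t + (2 ^ (N+1) * t + (N:ℝ) ^ (-((1:ℝ)+δ))) := by
      have hexp : f x - f y = (x 0 / (1 + x 0) - y 0 / (1 + y 0)) * Sx
          + (y 0 / (1 + y 0)) * (Sx - Sy) := by
        rw [hf x, hf y]
        rw [← hSx, ← hSy]
        ring
      have h1 : |x 0 / (1 + x 0) - y 0 / (1 + y 0)| ≤ 2 * t := by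
        calc |x 0 / (1 + x 0) - y 0 / (1 + y 0)| ≤ m 0 := pi_diff (hx 0) (hy 0)
          _ ≤ 2 ^ (0+1) * t := coord_le x y 0
          _ = 2 * t := by norm_num
      have h2 : |Sx| ≤ A := by
        rw [abs_of_nonneg (hSb x hx).1]; exact (hSb x hx).2
      have h3 : |y 0 / (1 + y 0)| ≤ 1 := by
        rw [abs_of_nonneg (pi_nonneg (hy 0))]; exact pi_le_one (hy 0)
      have h4 : |Sx - Sy| ≤ 2 ^ (N+1) * t + (N:ℝ) ^ (-((1:ℝ)+δ)) := by
        rw [hsplit] at hSd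
        linarith
      calc |f x - f y|
          = |(x 0 / (1 + x 0) - y 0 / (1 + y 0)) * Sx
              + (y 0 / (1 + y 0)) * (Sx - Sy)| := by rw [hexp]
        _ ≤ |(x 0 / (1 + x 0) - y 0 / (1 + y 0)) * Sx|
              + |(y 0 / (1 + y 0)) * (Sx - Sy)| := abs_add_le _ _
        _ ≤ (2*t) * A + 1 * (2 ^ (N+1) * t + (N:ℝ) ^ (-((1:ℝ)+δ))) := by
            rw [abs_mul, abs_mul]
            have e1 : |x 0 / (1 + x 0) - y 0 / (1 + y 0)| * |Sx| ≤ (2*t) * A :=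
              mul_le_mul h1 h2 (abs_nonneg _) (by positivity)
            have e2 : |y 0 / (1 + y 0)| * |Sx - Sy|
                ≤ 1 * (2 ^ (N+1) * t + (N:ℝ) ^ (-((1:ℝ)+δ))) :=
              mul_le_mul h3 h4 (abs_nonneg _) zero_le_one
            linarith
        _ = 2*A*t + (2 ^ (N+1) * t + (N:ℝ) ^ (-((1:ℝ)+δ))) := by ring
    -- bound each piece by multiples of L^(-ε)
    have hkey_t : t ≤ r0 * (Ce * L ^ (-ε)) := by
      calc t = r0 * Real.exp (-L) := ht
        _ ≤ r0 * Real.exp (-(L/3)) := by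
            apply mul_le_mul_of_nonneg_left (Real.exp_le_exp.mpr (by linarith))
            positivity
        _ ≤ r0 * (Ce * L ^ (-ε)) :=
            mul_le_mul_of_nonneg_left (hdec L hL1) hr0pos.le
    have hpow : (2:ℝ) ^ (N+1) * t ≤ Real.exp 2 * r0 * (Ce * L ^ (-ε)) := by
      have hlog2 : Real.log 2 ≤ 1 := by
        have := Real.log_le_sub_one_of_pos (show (0:ℝ) < 2 by norm_num)
        linarith
      have hlog2' : 0 ≤ Real.log 2 := Real.log_nonneg (by norm_num)
      have hp1 : (2:ℝ) ^ (N+1) = Real.exp (((N:ℝ)+1) * Real.log 2) := by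
        rw [show ((N:ℝ)+1) = ((N+1 : ℕ) : ℝ) by push_cast; ring,
          Real.exp_nat_mul, Real.exp_log (by norm_num : (0:ℝ) < 2)]
      have hp2 : ((N:ℝ)+1) * Real.log 2 ≤ L/2 + 2 := by
        calc ((N:ℝ)+1) * Real.log 2 ≤ ((N:ℝ)+1) * 1 :=
              mul_le_mul_of_nonneg_left hlog2 (by positivity)
          _ = (N:ℝ) + 1 := mul_one _
          _ ≤ L/2 + 2 := by linarith
      calc (2:ℝ) ^ (N+1) * t
          = Real.exp (((N:ℝ)+1) * Real.log 2) * (r0 * Real.exp (-L)) := by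
            rw [← hp1, ← ht]
        _ ≤ Real.exp (L/2 + 2) * (r0 * Real.exp (-L)) := by
            apply mul_le_mul_of_nonneg_right (Real.exp_le_exp.mpr hp2)
            positivity
        _ = Real.exp 2 * r0 * Real.exp (-(L/2)) := by
            have e : Real.exp (L/2 + 2) * Real.exp (-L)
                = Real.exp 2 * Real.exp (-(L/2)) := by
              rw [← Real.exp_add, ← Real.exp_add]
              ring_nf
            linear_combination r0 * e
        _ ≤ Real.exp 2 * r0 * Real.exp (-(L/3)) := by
            apply mul_le_mul_of_nonneg_left (Real.exp_le_exp.mpr (by linarith))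
            positivity
        _ ≤ Real.exp 2 * r0 * (Ce * L ^ (-ε)) := by
            apply mul_le_mul_of_nonneg_left (hdec L hL1)
            positivity
    have hNe : (N:ℝ) ^ (-((1:ℝ)+δ)) ≤ (2:ℝ) ^ ((1:ℝ)+δ) * L ^ (-ε) := by
      have hL20 : (0:ℝ) < L/2 := by linarith
      have s1 : (N:ℝ) ^ (-((1:ℝ)+δ)) ≤ (L/2) ^ (-((1:ℝ)+δ)) :=
        Real.rpow_le_rpow_of_nonpos hL20 hNge (by linarith)
      have s2 : (L/2) ^ (-((1:ℝ)+δ)) = (2:ℝ) ^ ((1:ℝ)+δ) * L ^ (-((1:ℝ)+δ)) := by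
        rw [Real.div_rpow hLpos.le (by norm_num : (0:ℝ) ≤ 2),
          Real.rpow_neg hLpos.le, Real.rpow_neg (by norm_num : (0:ℝ) ≤ 2)]
        field_simp
      have s3 : L ^ (-((1:ℝ)+δ)) ≤ L ^ (-ε) :=
        Real.rpow_le_rpow_of_exponent_le hL1 (by linarith)
      calc (N:ℝ) ^ (-((1:ℝ)+δ)) ≤ (L/2) ^ (-((1:ℝ)+δ)) := s1
        _ = (2:ℝ) ^ ((1:ℝ)+δ) * L ^ (-((1:ℝ)+δ)) := s2
        _ ≤ (2:ℝ) ^ ((1:ℝ)+δ) * L ^ (-ε) :=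
            mul_le_mul_of_nonneg_left s3 hC2.le
    -- final combination
    have hAt : 2*A*t ≤ 2*A*(r0 * (Ce * L ^ (-ε))) := by
      apply mul_le_mul_of_nonneg_left hkey_t
      linarith
    calc |f x - f y| ≤ 2*A*t + (2 ^ (N+1) * t + (N:ℝ) ^ (-((1:ℝ)+δ))) := hmain
      _ ≤ 2*A*(r0 * (Ce * L ^ (-ε))) + (Real.exp 2 * r0 * (Ce * L ^ (-ε))
            + (2:ℝ) ^ ((1:ℝ)+δ) * L ^ (-ε)) := by linarith
      _ = ((2*A + Real.exp 2) * r0 * Ce + (2:ℝ) ^ ((1:ℝ)+δ)) * L ^ (-ε) := by ring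
end
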